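/- Let T > 0 and c_r ∈ [0,1), and let γ_r : [0,T) × ℝ → ℝ be such that there exist extended class-𝒦 functions γ̲ and γ̄ with γ̲(ρ) ≤ γ_r(t, ρ) ≤ γ̄(ρ) for all t ∈ [c_r T, T) and all ρ ∈ ℝ. Let r : [0,∞) → ℝ be continuous, differentiable on [0,T) and on (T,∞), and satisfy r'(t) = −(T/(T−t)²) · γ_r(t, r(t)) for all t ∈ [0,T) and r'(t) = 0 for all t > T. Then, for every initial value r(0) ∈ ℝ, r(t) = 0 for all t ≥ T. -/

import Mathlib

open Set Filter Topology

/-- A function `γ : ℝ → ℝ` is an extended class-𝒦 function if it is continuous,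
strictly increasing, and `γ 0 = 0`. -/
def IsExtendedClassK (γ : ℝ → ℝ) : Prop :=
  Continuous γ ∧ StrictMono γ ∧ γ 0 = 0

lemma PTZF_comp (T : ℝ) (hT : 0 < T) (γᵣ : ℝ → ℝ → ℝ) (r : ℝ → ℝ)
    (hrcont : ContinuousOn r (Set.Ici 0))
    (hode : ∀ t ∈ Set.Ico (0:ℝ) T,
      HasDerivWithinAt r (-(T / (T - t)^2) * γᵣ t (r t)) (Set.Ico 0 T) t)
    (c s t : ℝ) (hs : 0 ≤ s) (hst : s ≤ t) (ht : t < T)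
    (hb : ∀ x ∈ Set.Icc s t, c ≤ γᵣ x (r x)) :
    r t + c * T / (T - t) ≤ r s + c * T / (T - s) := by
  have key : ∀ x ∈ Set.Ioo s t,
      HasDerivAt (fun x => r x + c * T / (T - x))
        (T / (T - x)^2 * (c - γᵣ x (r x))) x := by
    intro x hx
    have hx0 : 0 < x := lt_of_le_of_lt hs hx.1
    have hxT : x < T := lt_trans hx.2 ht
    have hne : T - x ≠ 0 := sub_ne_zero.2 (ne_of_gt hxT)
    have hr : HasDerivAt r (-(T / (T - x)^2) * γᵣ x (r x)) x := by
      refine (hode x ⟨hx0.le, hxT⟩).hasDerivAt ?_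
      exact mem_of_superset (Ioo_mem_nhds hx0 hxT) Ioo_subset_Ico_self
    have h1 : HasDerivAt (fun y => T - y) (-1) x := (hasDerivAt_id x).const_sub T
    have h2 : HasDerivAt (fun y => c * T / (T - y)) (c * T * (-(-1) / (T - x)^2)) x := by
      simpa [div_eq_mul_inv] using (h1.inv hne).const_mul (c * T)
    have := hr.add h2
    refine this.congr_deriv ?_
    ring
  have hanti : AntitoneOn (fun x => r x + c * T / (T - x)) (Set.Icc s t) := by
    apply antitoneOn_of_deriv_nonpos (convex_Icc s t)
    · apply ContinuousOn.add
      · exact hrcont.mono (fun x hx => le_trans hs hx.1)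
      · apply ContinuousOn.div continuousOn_const (by fun_prop)
        intro x hx
        exact sub_ne_zero.2 (ne_of_gt (lt_of_le_of_lt hx.2 ht))
    · rw [interior_Icc]
      exact fun x hx => ((key x hx).differentiableAt).differentiableWithinAt
    · rw [interior_Icc]
      intro x hx
      rw [(key x hx).deriv]
      apply mul_nonpos_of_nonneg_of_nonpos
      · exact div_nonneg hT.le (sq_nonneg _)
      · have := hb x (Ioo_subset_Icc_self hx)
        linarith
  exact hanti (left_mem_Icc.2 hst) (right_mem_Icc.2 hst) hst

lemma PTZF_half (T a : ℝ) (hT : 0 < T) (ha : 0 ≤ a) (haT : a < T)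
    (γᵣ : ℝ → ℝ → ℝ) (γlow : ℝ → ℝ) (hmono : Monotone γlow)
    (hpos : ∀ ε : ℝ, 0 < ε → 0 < γlow ε)
    (hsand : ∀ t ∈ Set.Ico a T, ∀ ρ : ℝ, γlow ρ ≤ γᵣ t ρ)
    (r : ℝ → ℝ) (hrcont : ContinuousOn r (Set.Ici 0))
    (hode : ∀ t ∈ Set.Ico (0:ℝ) T,
      HasDerivWithinAt r (-(T / (T - t)^2) * γᵣ t (r t)) (Set.Ico 0 T) t)
    (ε : ℝ) (hε : 0 < ε) :
    ∃ t0 ∈ Set.Ico a T, ∀ t ∈ Set.Ico t0 T, r t ≤ ε := by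
  set C := γlow ε with hCdef
  have hC : 0 < C := hpos ε hε
  have hCT : 0 < C * T := mul_pos hC hT
  -- bound helper : whenever r ≥ ε on [s,t] ⊆ [a,T)
  have hbnd : ∀ s t : ℝ, a ≤ s → t < T → (∀ x ∈ Set.Icc s t, ε ≤ r x) →
      ∀ x ∈ Set.Icc s t, C ≤ γᵣ x (r x) := by
    intro s t has htT hge x hx
    have hxa : x ∈ Set.Ico a T := ⟨le_trans has hx.1, lt_of_le_of_lt hx.2 htT⟩
    exact le_trans (hmono (hge x hx)) (hsand x hxa (r x))
  -- Step B: there is a point where r ≤ ε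
  have hB : ∃ t0 ∈ Set.Ico a T, r t0 ≤ ε := by
    by_contra h
    push_neg at h
    set M := r a + C * T / (T - a) with hMdef
    have hTa : 0 < T - a := sub_pos.2 haT
    have hMε : ε < M := by
      have h1 := h a ⟨le_refl a, haT⟩
      have h2 : 0 < C * T / (T - a) := div_pos hCT hTa
      rw [hMdef]; linarith
    set δ := min (T - a) (C * T / (M - ε)) / 2 with hδdef
    have hδpos : 0 < δ := by
      apply half_pos
      exact lt_min hTa (div_pos hCT (by linarith))
    set t := T - δ with htdef
    have htT : t < T := by simp [htdef]; linarith
    have hat : a ≤ t := by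
      have hd : δ ≤ (T - a) / 2 := by
        rw [hδdef]; linarith [min_le_left (T - a) (C * T / (M - ε))]
      simp only [htdef]; linarith
    have hge : ∀ x ∈ Set.Icc a t, ε ≤ r x :=
      fun x hx => (h x ⟨hx.1, lt_of_le_of_lt hx.2 htT⟩).le
    have hcomp := PTZF_comp T hT γᵣ r hrcont hode C a t ha hat htT
      (hbnd a t (le_refl a) htT hge)
    have hdiv : M - ε < C * T / (T - t) := by
      have h1 : T - t = δ := by simp [htdef]
      have h2 : δ < C * T / (M - ε) := by
        have hd : δ ≤ (C * T / (M - ε)) / 2 := by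
          rw [hδdef]; linarith [min_le_right (T - a) (C * T / (M - ε))]
        have hh : 0 < C * T / (M - ε) := div_pos hCT (by linarith)
        linarith
      rw [h1]
      calc M - ε = C * T / (C * T / (M - ε)) := by
            rw [div_div_cancel₀]; exact ne_of_gt hCT
        _ < C * T / δ := div_lt_div_of_pos_left hCT hδpos h2
    have := h t ⟨hat, htT⟩
    rw [← hMdef] at hcomp
    linarith
  -- Step A: trapping
  obtain ⟨t0, ht0, hrt0⟩ := hB
  refine ⟨t0, ht0, ?_⟩
  rintro t ⟨htt0, htT⟩
  by_contra hgt
  push_neg at hgt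
  have ht0t : t0 < t := lt_of_le_of_ne htt0 (fun hh => by rw [← hh] at hgt; linarith)
  have ht00 : 0 ≤ t0 := le_trans ha ht0.1
  -- the last crossing point
  set S := {x ∈ Set.Icc t0 t | r x ≤ ε} with hSdef
  have hSne : S.Nonempty := ⟨t0, ⟨le_refl t0, ht0t.le⟩, hrt0⟩
  have hSbdd : BddAbove S := ⟨t, fun x hx => hx.1.2⟩
  have hSclosed : IsClosed S := by
    have : S = Set.Icc t0 t ∩ r ⁻¹' Set.Iic ε := by
      ext x; simp [hSdef, Set.mem_inter_iff, and_comm]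
    rw [this]
    apply ContinuousOn.preimage_isClosed_of_isClosed
      (hrcont.mono (fun x hx => le_trans ht00 hx.1)) isClosed_Icc isClosed_Iic
  have hsS : sSup S ∈ S := hSclosed.csSup_mem hSne hSbdd
  set s := sSup S with hsdef
  have hs0 : 0 ≤ s := le_trans ht00 hsS.1.1
  have hst : s ≤ t := hsS.1.2
  have hrs : r s ≤ ε := hsS.2
  have hslt : s < t := lt_of_le_of_ne hst (fun hh => by rw [hh] at hrs; linarith)
  have hsT : s < T := lt_of_lt_of_le hslt htT.le
  -- to the right of s, r > ε
  have hright : ∀ x ∈ Set.Ioc s t, ε < r x := by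
    rintro x ⟨hsx, hxt⟩
    by_contra hle
    push_neg at hle
    have hxS : x ∈ S := ⟨⟨le_trans hsS.1.1 hsx.le, hxt⟩, hle⟩
    exact absurd (le_csSup hSbdd hxS) (not_le.2 hsx)
  -- r s = ε by continuity from the right
  have hrs' : ε ≤ r s := by
    have htend : Tendsto r (𝓝[Set.Ioc s t] s) (𝓝 (r s)) := by
      have := (hrcont.continuousWithinAt (Set.mem_Ici.2 hs0))
      exact this.mono_left (nhdsWithin_mono s (fun x hx => le_trans hs0 hx.1.le))
    have : (𝓝[Set.Ioc s t] s).NeBot := by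
      rw [nhdsWithin_Ioc_eq_nhdsGT hslt]; infer_instance
    exact ge_of_tendsto htend
      (eventually_mem_nhdsWithin.mono (fun x hx => (hright x hx).le))
  -- apply comparison on [s, t]
  have hge : ∀ x ∈ Set.Icc s t, ε ≤ r x := by
    rintro x ⟨h1, h2⟩
    rcases eq_or_lt_of_le h1 with rfl | h1'
    · exact hrs'
    · exact (hright x ⟨h1', h2⟩).le
  have hcomp := PTZF_comp T hT γᵣ r hrcont hode C s t hs0 hst htT
    (hbnd s t (le_trans ht0.1 hsS.1.1) htT hge)
  have hmonodiv : C * T / (T - s) < C * T / (T - t) :=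
    div_lt_div_of_pos_left hCT (sub_pos.2 htT) (by linarith)
  have : r s = ε := le_antisymm hrs hrs'
  linarith

/-- Property 1 (prescribed-time zeroing function): if `r` is continuous on `[0,∞)`,
satisfies `r' t = -(T/(T-t)²) · γᵣ (t, r t)` on `[0,T)` and `r' t = 0` on `(T,∞)`,
where `γᵣ` is sandwiched between two extended class-𝒦 functions on the late stage
`[cᵣ T, T)`, then `r t = 0` for every `t ≥ T`, for an arbitrary initial value `r 0`. -/
theorem PTZF_reaches_zero_at_prescribed_time
    (T cᵣ : ℝ) (hT : 0 < T) (hcr : cᵣ ∈ Set.Ico (0:ℝ) 1)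
    (γᵣ : ℝ → ℝ → ℝ)
    (γlow γhigh : ℝ → ℝ)
    (hγlow : IsExtendedClassK γlow) (hγhigh : IsExtendedClassK γhigh)
    (hsand : ∀ t ∈ Set.Ico (cᵣ * T) T, ∀ ρ : ℝ, γlow ρ ≤ γᵣ t ρ ∧ γᵣ t ρ ≤ γhigh ρ)
    (r : ℝ → ℝ)
    (hrcont : ContinuousOn r (Set.Ici 0))
    (hode : ∀ t ∈ Set.Ico (0:ℝ) T,
      HasDerivWithinAt r (-(T / (T - t)^2) * γᵣ t (r t)) (Set.Ico 0 T) t)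
    (hflat : ∀ t, T < t → HasDerivAt r 0 t) :
    ∀ t, T ≤ t → r t = 0 := by
  have ha : 0 ≤ cᵣ * T := mul_nonneg hcr.1 hT.le
  have haT : cᵣ * T < T := by
    have := mul_lt_mul_of_pos_right hcr.2 hT
    linarith
  -- upper estimate
  have hupper : ∀ ε : ℝ, 0 < ε →
      ∃ t0 ∈ Set.Ico (cᵣ * T) T, ∀ t ∈ Set.Ico t0 T, r t ≤ ε := by
    intro ε hε
    refine PTZF_half T (cᵣ * T) hT ha haT γᵣ γlow hγlow.2.1.monotone ?_
      (fun t ht ρ => (hsand t ht ρ).1) r hrcont hode ε hε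
    intro x hx
    have := hγlow.2.1 hx
    rwa [hγlow.2.2] at this
  -- lower estimate, by symmetry
  have hlower : ∀ ε : ℝ, 0 < ε →
      ∃ t0 ∈ Set.Ico (cᵣ * T) T, ∀ t ∈ Set.Ico t0 T, -ε ≤ r t := by
    intro ε hε
    have h := PTZF_half T (cᵣ * T) hT ha haT (fun t ρ => -(γᵣ t (-ρ)))
      (fun ρ => -(γhigh (-ρ)))
      (fun x y hxy => neg_le_neg (hγhigh.2.1.monotone (neg_le_neg hxy)))
      (fun x hx => by
        have := hγhigh.2.1 (neg_lt_zero.2 hx)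
        rw [hγhigh.2.2] at this
        show (0:ℝ) < -γhigh (-x)
        linarith)
      (fun t ht ρ => neg_le_neg (hsand t ht (-ρ)).2)
      (fun x => -(r x)) hrcont.neg
      (fun t ht => by
        have h2 := (hode t ht).neg
        simp only [neg_neg, mul_neg]
        exact h2) ε hε
    obtain ⟨t0, ht0, hh⟩ := h
    refine ⟨t0, ht0, fun t ht => ?_⟩
    have := hh t ht
    linarith
  -- the limit of r from the left at T is r T
  have hnhds : Tendsto r (𝓝[<] T) (𝓝 (r T)) := by
    have h1 : Tendsto r (𝓝[Set.Ici 0] T) (𝓝 (r T)) :=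
      hrcont.continuousWithinAt (le_of_lt hT)
    refine h1.mono_left (nhdsWithin_le_of_mem ?_)
    exact mem_nhdsWithin_of_mem_nhds
      (mem_of_superset (IsOpen.mem_nhds isOpen_Ioi hT) Ioi_subset_Ici_self)
  have hrT : r T = 0 := by
    have hub : ∀ ε : ℝ, 0 < ε → r T ≤ ε := by
      intro ε hε
      obtain ⟨t0, ht0, hh⟩ := hupper ε hε
      refine le_of_tendsto hnhds ?_
      filter_upwards [Ioo_mem_nhdsLT_of_mem (⟨ht0.2, le_refl T⟩ : T ∈ Set.Ioc t0 T)]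
        with x hx
      exact hh x ⟨hx.1.le, hx.2⟩
    have hlb : ∀ ε : ℝ, 0 < ε → -ε ≤ r T := by
      intro ε hε
      obtain ⟨t0, ht0, hh⟩ := hlower ε hε
      refine ge_of_tendsto hnhds ?_
      filter_upwards [Ioo_mem_nhdsLT_of_mem (⟨ht0.2, le_refl T⟩ : T ∈ Set.Ioc t0 T)]
        with x hx
      exact hh x ⟨hx.1.le, hx.2⟩
    have h1 : r T ≤ 0 := le_of_forall_pos_le_add (fun ε hε => by linarith [hub ε hε])
    have h2 : (0:ℝ) ≤ r T := le_of_forall_pos_le_add (fun ε hε => by linarith [hlb ε hε])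
    linarith
  -- conclusion
  intro t htT'
  rcases eq_or_lt_of_le htT' with rfl | hlt
  · exact hrT
  · have hconst : ∀ s ∈ Set.Ioc T t, r t = r s := by
      intro s hs
      have hc : ContinuousOn r (Set.Icc s t) :=
        hrcont.mono (fun x hx => le_trans (le_trans hT.le hs.1.le) hx.1)
      have hd : ∀ x ∈ Set.Ico s t, HasDerivWithinAt r 0 (Set.Ici x) x :=
        fun x hx => (hflat x (lt_of_lt_of_le hs.1 hx.1)).hasDerivWithinAt
      exact constant_of_has_deriv_right_zero hc hd t (right_mem_Icc.2 hs.2)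
    have hne : (𝓝[Set.Ioc T t] T).NeBot := by
      rw [nhdsWithin_Ioc_eq_nhdsGT hlt]
      infer_instance
    have h1 : Tendsto r (𝓝[Set.Ioc T t] T) (𝓝 (r T)) :=
      (hrcont.continuousWithinAt (le_of_lt hT)).mono_left
        (nhdsWithin_mono T (fun x hx => le_trans hT.le hx.1.le))
    have h2 : Tendsto r (𝓝[Set.Ioc T t] T) (𝓝 (r t)) := by
      refine Tendsto.congr' ?_ tendsto_const_nhds
      filter_upwards [eventually_mem_nhdsWithin] with x hx
      exact hconst x hx
    have := tendsto_nhds_unique h2 h1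
    rw [this, hrT]
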